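/- Let S be a Cu-semigroup, let y be a full element of S, and let (y_n)_{n≥1} be a sequence of full elements of S with y_n ≤ y_{n+1} ≤ y for all n. If lim_{n→∞} ρ(y, y_n) = 0 (the sequence (ρ(y,y_n)) is decreasing, so the limit exists), then: (1) there is m such that F_y(S) = ∅ and F_{y_n}(S) = ∅ for all n ≥ m; (2) lim_{n→∞} rc(S, y_n) = rc(S, y); (3) if rc(S, y) < ∞, then lim_{n→∞} rc(S, y_n) = rc(S, y) = 0. -/

import Mathlib

open scoped ENNReal

/-- `x' ≪ x`: for every increasing sequence whose supremum is `≥ x`,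
some term of the sequence dominates `x'`. -/
def CuWayBelow {S : Type*} [Preorder S] (x' x : S) : Prop :=
  ∀ f : ℕ → S, Monotone f → ∀ s : S, IsLUB (Set.range f) s → x ≤ s → ∃ n, x' ≤ f n

/-- A `Cu`-semigroup: a partially ordered abelian monoid whose least element is `0`,
satisfying the axioms (O1)–(O4). -/
class CuSemigroup (S : Type*) extends AddCommMonoid S, PartialOrder S, IsOrderedAddMonoid S where
  zero_le : ∀ x : S, 0 ≤ x
  O1 : ∀ f : ℕ → S, Monotone f → ∃ s : S, IsLUB (Set.range f) s
  O2 : ∀ x : S, ∃ f : ℕ → S, (∀ n, CuWayBelow (f n) (f (n + 1))) ∧ IsLUB (Set.range f) x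
  O3 : ∀ {x' x y' y : S}, CuWayBelow x' x → CuWayBelow y' y → CuWayBelow (x' + y') (x + y)
  O4 : ∀ f g : ℕ → S, Monotone f → Monotone g → ∀ a b : S,
      IsLUB (Set.range f) a → IsLUB (Set.range g) b →
      IsLUB (Set.range fun n => f n + g n) (a + b)

/-- A functional on a `Cu`-semigroup: a map `S → [0,∞]` which is additive, order
preserving, sends `0` to `0`, and preserves suprema of increasing sequences. -/
structure IsCuFunctional {S : Type*} [CuSemigroup S] (Λ : S → ℝ≥0∞) : Prop where
  map_zero : Λ 0 = 0
  map_add : ∀ x y : S, Λ (x + y) = Λ x + Λ y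
  mono : Monotone Λ
  map_sup : ∀ f : ℕ → S, Monotone f → ∀ s : S, IsLUB (Set.range f) s → Λ s = ⨆ n, Λ (f n)

/-- `x` is full if `∞ · x = sup_n (n • x)` is the largest element of `S`. -/
def IsFull {S : Type*} [CuSemigroup S] (x : S) : Prop :=
  ∀ s : S, IsLUB (Set.range fun n : ℕ => n • x) s → ∀ y : S, y ≤ s

/-- `F_w(S) ≠ ∅`: there exists a functional normalized at `w`. -/
def FNormNonempty {S : Type*} [CuSemigroup S] (w : S) : Prop :=
  ∃ Λ : S → ℝ≥0∞, IsCuFunctional Λ ∧ Λ w = 1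

/-- The rank ratio `ρ(x, y)`: the infimum of all `r ∈ (0,∞)` with
`λ(x) ≤ r·λ(y)` for every functional `λ`; `∞` if there is no such `r`. -/
noncomputable def rankRatio {S : Type*} [CuSemigroup S] (x y : S) : ℝ≥0∞ :=
  sInf {r : ℝ≥0∞ | 0 < r ∧ r ≠ ⊤ ∧ ∀ Λ : S → ℝ≥0∞, IsCuFunctional Λ → Λ x ≤ r * Λ y}

/-- `S` has `r`-comparison relative to `w`. -/
def HasRComparison {S : Type*} [CuSemigroup S] (r : ℝ≥0∞) (w : S) : Prop :=
  ∀ x y : S, (∀ Λ : S → ℝ≥0∞, IsCuFunctional Λ → Λ x + r * Λ w ≤ Λ y) → x ≤ y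

/-- The radius of comparison of `S` relative to `w`: the infimum of all `r ∈ (0,∞)`
for which `S` has `r`-comparison relative to `w`; `∞` if there is no such `r`. -/
noncomputable def rc {S : Type*} [CuSemigroup S] (w : S) : ℝ≥0∞ :=
  sInf {r : ℝ≥0∞ | 0 < r ∧ r ≠ ⊤ ∧ HasRComparison r w}

/-- Proposition (ExtremeZeroRho): for an increasing sequence `(y n)` of full
elements below a full element `y`, if `lim_n ρ(y, y n) = 0` (the limit being the
infimum of the decreasing sequence), then: (1) there is `m` with `F_y(S) = ∅` and
`F_{y n}(S) = ∅` for all `n ≥ m`; (2) `lim_n rc(S, y n) = rc(S, y)` (the limit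
being the infimum of the decreasing sequence); (3) if `rc(S, y) < ∞`, then
`lim_n rc(S, y n) = rc(S, y) = 0`. -/
theorem stmt5 {S : Type*} [CuSemigroup S] (y : S) (ys : ℕ → S)
    (hy : IsFull y) (hys : ∀ n, IsFull (ys n))
    (hmono : ∀ n, ys n ≤ ys (n + 1)) (hle : ∀ n, ys n ≤ y)
    (hlim : (⨅ n, rankRatio y (ys n)) = 0) :
    (∃ m, ¬ FNormNonempty y ∧ ∀ n ≥ m, ¬ FNormNonempty (ys n)) ∧
      (⨅ n, rc (ys n)) = rc y ∧
      (rc y ≠ ⊤ → (⨅ n, rc (ys n)) = 0 ∧ rc y = 0) := by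
  have hys_mono : Monotone ys := monotone_nat_of_le_succ hmono
  have h1 : (⨅ n, rankRatio y (ys n)) < 1 := by rw [hlim]; exact zero_lt_one
  obtain ⟨m, hm⟩ := iInf_lt_iff.mp h1
  obtain ⟨r₀, ⟨hr0pos, hr0top, hr0⟩, hr01⟩ := sInf_lt_iff.mp hm
  have key : ∀ a : ℝ≥0∞, a ≤ r₀ * a → a = 0 ∨ a = ⊤ := by
    intro a ha
    by_contra h
    push_neg at h
    have hlt : a < a :=
      lt_of_le_of_lt ha (by
        calc r₀ * a < 1 * a := ENNReal.mul_lt_mul_left h.1 h.2 hr01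
          _ = a := one_mul a)
    exact lt_irrefl a hlt
  have Hy : ∀ Λ : S → ℝ≥0∞, IsCuFunctional Λ → Λ y = 0 ∨ Λ y = ⊤ := fun Λ hΛ =>
    key _ ((hr0 Λ hΛ).trans (mul_le_mul_right (hΛ.mono (hle m)) r₀))
  have Hys : ∀ n, m ≤ n → ∀ Λ : S → ℝ≥0∞, IsCuFunctional Λ →
      Λ (ys n) = 0 ∨ Λ (ys n) = ⊤ := by
    intro n hn Λ hΛ
    refine key _ ?_
    calc Λ (ys n) ≤ Λ y := hΛ.mono (hle n)
      _ ≤ r₀ * Λ (ys m) := hr0 Λ hΛ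
      _ ≤ r₀ * Λ (ys n) := mul_le_mul_right (hΛ.mono (hys_mono hn)) r₀
  have Hzero : ∀ n, m ≤ n → ∀ Λ : S → ℝ≥0∞, IsCuFunctional Λ →
      (Λ (ys n) = 0 ↔ Λ y = 0) := by
    intro n hn Λ hΛ
    constructor
    · intro h0
      have hle2 : Λ y ≤ r₀ * Λ (ys n) :=
        (hr0 Λ hΛ).trans (mul_le_mul_right (hΛ.mono (hys_mono hn)) r₀)
      simpa [h0] using hle2
    · intro h0
      exact le_antisymm (h0 ▸ hΛ.mono (hle n)) zero_le'
  have Hval : ∀ n, m ≤ n → ∀ r r' : ℝ≥0∞, r ≠ 0 → r' ≠ 0 →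
      ∀ Λ : S → ℝ≥0∞, IsCuFunctional Λ → r * Λ (ys n) = r' * Λ y := by
    intro n hn r r' hr hr' Λ hΛ
    rcases Hys n hn Λ hΛ with h | h
    · rw [h, mul_zero, (Hzero n hn Λ hΛ).mp h, mul_zero]
    · have hy' : Λ y = ⊤ := top_le_iff.mp (h ▸ hΛ.mono (hle n))
      rw [h, hy', ENNReal.mul_top hr, ENNReal.mul_top hr']
  have Hvaly : ∀ r r' : ℝ≥0∞, r ≠ 0 → r' ≠ 0 →
      ∀ Λ : S → ℝ≥0∞, IsCuFunctional Λ → r * Λ y = r' * Λ y := by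
    intro r r' hr hr' Λ hΛ
    rcases Hy Λ hΛ with h | h
    · rw [h, mul_zero, mul_zero]
    · rw [h, ENNReal.mul_top hr, ENNReal.mul_top hr']
  have Hiff : ∀ n, m ≤ n → ∀ r : ℝ≥0∞, r ≠ 0 →
      (HasRComparison r (ys n) ↔ HasRComparison r y) := by
    intro n hn r hr
    constructor
    · intro h x z hxz
      exact h x z fun Λ hΛ => by rw [Hval n hn r r hr hr Λ hΛ]; exact hxz Λ hΛ
    · intro h x z hxz
      exact h x z fun Λ hΛ => by rw [← Hval n hn r r hr hr Λ hΛ]; exact hxz Λ hΛ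
  have hrc_eq : ∀ n, m ≤ n → rc (ys n) = rc y := by
    intro n hn
    unfold rc
    congr 1
    ext r
    simp only [Set.mem_setOf_eq]
    constructor
    · rintro ⟨h1, h2, h3⟩
      exact ⟨h1, h2, (Hiff n hn r h1.ne').mp h3⟩
    · rintro ⟨h1, h2, h3⟩
      exact ⟨h1, h2, (Hiff n hn r h1.ne').mpr h3⟩
  have hrc_mono : ∀ n, rc y ≤ rc (ys n) := by
    intro n
    apply sInf_le_sInf
    rintro r ⟨h1, h2, h3⟩
    refine ⟨h1, h2, fun x z hxz => h3 x z fun Λ hΛ => ?_⟩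
    calc Λ x + r * Λ (ys n) ≤ Λ x + r * Λ y :=
          add_le_add_right (mul_le_mul_right (hΛ.mono (hle n)) r) _
      _ ≤ Λ z := hxz Λ hΛ
  have hinf : (⨅ n, rc (ys n)) = rc y :=
    le_antisymm (iInf_le_of_le m (hrc_eq m le_rfl).le) (le_iInf hrc_mono)
  refine ⟨⟨m, ?_, ?_⟩, hinf, ?_⟩
  · rintro ⟨Λ, hΛ, hΛ1⟩
    rcases Hy Λ hΛ with h | h <;> rw [hΛ1] at h <;> simp at h
  · rintro n hn ⟨Λ, hΛ, hΛ1⟩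
    rcases Hys n hn Λ hΛ with h | h <;> rw [hΛ1] at h <;> simp at h
  · intro htop
    have hA : {r : ℝ≥0∞ | 0 < r ∧ r ≠ ⊤ ∧ HasRComparison r y}.Nonempty := by
      by_contra h
      rw [Set.not_nonempty_iff_eq_empty] at h
      exact htop (by rw [rc, h, sInf_empty])
    obtain ⟨r, hr1, hr2, hr3⟩ := hA
    have hall : ∀ r' : ℝ≥0∞, 0 < r' → r' ≠ ⊤ → rc y ≤ r' := by
      intro r' h1 h2
      refine sInf_le ⟨h1, h2, fun x z hxz => hr3 x z fun Λ hΛ => ?_⟩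
      rw [Hvaly r r' hr1.ne' h1.ne' Λ hΛ]
      exact hxz Λ hΛ
    have hzero : rc y = 0 := by
      by_contra h0
      obtain ⟨r', hr'1, hr'2⟩ := exists_between (pos_iff_ne_zero.mpr h0)
      exact absurd (hall r' hr'1 (hr'2.trans_le le_top).ne) (not_le.mpr hr'2)
    exact ⟨hinf.trans hzero, hzero⟩
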